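/- Let R ⊂ ℝ^N be a bounded connected open set and J a continuous nonnegative symmetric kernel with J(0) > 0. There exists a constant C > 0 such that for all z ∈ L²(R) with ∫_R z = 0, ∫_R∫_R J(x-y)(z(y)-z(x))² dy dx ≥ C ∫_R z(x)² dx (nonlocal Poincaré inequality). -/

import Mathlib

set_option maxHeartbeats 1000000

open MeasureTheory Metric Bornology ENNReal

section Aux

variable {N : ℕ}
noncomputable def nlK (R : Set (EuclideanSpace ℝ (Fin N))) (J : EuclideanSpace ℝ (Fin N) → ℝ) :
    ℕ → EuclideanSpace ℝ (Fin N) → EuclideanSpace ℝ (Fin N) → ℝ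
  | 0 => fun x y => J (x - y)
  | (n+1) => fun x y => ∫ w in R, nlK R J n x w * J (w - y)

lemma nlK_zero (R : Set (EuclideanSpace ℝ (Fin N))) (J : EuclideanSpace ℝ (Fin N) → ℝ) (x y) :
    nlK R J 0 x y = J (x - y) := rfl

lemma nlK_succ (R : Set (EuclideanSpace ℝ (Fin N))) (J : EuclideanSpace ℝ (Fin N) → ℝ) (n x y) :
    nlK R J (n+1) x y = ∫ w in R, nlK R J n x w * J (w - y) := rfl

lemma nlK_nonneg {R : Set (EuclideanSpace ℝ (Fin N))} {J : EuclideanSpace ℝ (Fin N) → ℝ}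
    (hJ : ∀ v, 0 ≤ J v) : ∀ n x y, 0 ≤ nlK R J n x y := by
  intro n
  induction n with
  | zero => intro x y; exact hJ _
  | succ n ih =>
    intro x y
    rw [nlK_succ]
    exact integral_nonneg fun w => mul_nonneg (ih x w) (hJ _)

lemma nlK_continuous {R : Set (EuclideanSpace ℝ (Fin N))} {J : EuclideanSpace ℝ (Fin N) → ℝ}
    (hJcont : Continuous J) (hRb : IsBounded R) (hRm : MeasurableSet R) :
    ∀ n, Continuous (fun p : EuclideanSpace ℝ (Fin N) × EuclideanSpace ℝ (Fin N) =>
      nlK R J n p.1 p.2) := by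
  intro n
  induction n with
  | zero => exact hJcont.comp (continuous_fst.sub continuous_snd)
  | succ n ih =>
    have hshow : (fun p : EuclideanSpace ℝ (Fin N) × EuclideanSpace ℝ (Fin N) =>
        nlK R J (n+1) p.1 p.2)
        = fun p => ∫ w in R, nlK R J n p.1 w * J (w - p.2) := by
      funext p; rw [nlK_succ]
    rw [hshow, continuous_iff_continuousAt]
    intro p₀
    have hcomp : IsCompact (closure R) := hRb.isCompact_closure
    obtain ⟨S₁, hS₁⟩ : ∃ S₁, ∀ q ∈ (closedBall p₀.1 1) ×ˢ closure R,
        |nlK R J n q.1 q.2| ≤ S₁ := by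
      rcases ((isCompact_closedBall p₀.1 1).prod hcomp).exists_bound_of_continuousOn
        ((ih.abs).continuousOn) with ⟨S₁, hS₁⟩
      exact ⟨S₁, by simpa using hS₁⟩
    obtain ⟨S₂, hS₂⟩ : ∃ S₂, ∀ q ∈ closure R ×ˢ closedBall p₀.2 1,
        |J (q.1 - q.2)| ≤ S₂ := by
      rcases (hcomp.prod (isCompact_closedBall p₀.2 1)).exists_bound_of_continuousOn
        ((hJcont.comp (continuous_fst.sub continuous_snd)).abs.continuousOn) with ⟨S₂, hS₂⟩
      exact ⟨S₂, by simpa using hS₂⟩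
    have hvol : volume R < ⊤ :=
      lt_of_le_of_lt (measure_mono subset_closure) hcomp.measure_lt_top
    apply continuousAt_of_dominated (bound := fun _ => |S₁| * |S₂|)
    · filter_upwards with p
      exact ((ih.comp ((continuous_const : Continuous fun _ => p.1).prodMk
          continuous_id)).mul (hJcont.comp (continuous_id.sub continuous_const))).aestronglyMeasurable
    · filter_upwards [Metric.ball_mem_nhds p₀ one_pos] with p hp
      have hp' := hp
      rw [Metric.mem_ball, Prod.dist_eq] at hp'
      have hp1 : p.1 ∈ closedBall p₀.1 1 :=
        Metric.mem_closedBall.2 (le_trans (le_max_left _ _) (le_of_lt hp'))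
      have hp2 : p.2 ∈ closedBall p₀.2 1 :=
        Metric.mem_closedBall.2 (le_trans (le_max_right _ _) (le_of_lt hp'))
      refine (ae_restrict_mem hRm).mono fun w hw => ?_
      have hw' : w ∈ closure R := subset_closure hw
      calc ‖nlK R J n p.1 w * J (w - p.2)‖
          = |nlK R J n p.1 w| * |J (w - p.2)| := abs_mul _ _
        _ ≤ |S₁| * |S₂| := by
            apply mul_le_mul
            · exact le_trans (hS₁ (p.1, w) ⟨hp1, hw'⟩) (le_abs_self _)
            · exact le_trans (hS₂ (w, p.2) ⟨hw', hp2⟩) (le_abs_self _)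
            · exact abs_nonneg _
            · exact abs_nonneg _
    · exact integrableOn_const hvol.ne
    · filter_upwards with w
      exact ((ih.comp (continuous_fst.prodMk continuous_const)).mul
        (hJcont.comp (continuous_const.sub continuous_snd))).continuousAt

lemma integrableOn_of_continuous {R : Set (EuclideanSpace ℝ (Fin N))}
    (hRb : IsBounded R) (h : EuclideanSpace ℝ (Fin N) → ℝ) (hh : Continuous h) :
    IntegrableOn h R := by
  exact (hh.continuousOn.integrableOn_compact hRb.isCompact_closure).mono_set subset_closure

/-- Positivity propagation step. -/
lemma nlK_pos_step {R : Set (EuclideanSpace ℝ (Fin N))} {J : EuclideanSpace ℝ (Fin N) → ℝ}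
    (hJcont : Continuous J) (hJnonneg : ∀ v, 0 ≤ J v)
    (hRo : IsOpen R) (hRb : IsBounded R) (hRm : MeasurableSet R)
    {δ M : ℝ} (hδ : 0 < δ) (hM : 0 < M) (hJδ : ∀ v, ‖v‖ ≤ δ → M ≤ J v)
    {n : ℕ} {x y w : EuclideanSpace ℝ (Fin N)} (hw : w ∈ closure R)
    (hyw : ‖y - w‖ < δ / 2) (hpos : 0 < nlK R J n x w) :
    0 < nlK R J (n+1) x y := by
  have hKc : Continuous (fun u => nlK R J n x u) :=
    (nlK_continuous hJcont hRb hRm n).comp (Continuous.prodMk continuous_const continuous_id)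
  -- a ball around w where `nlK n x ·` is positive
  have : {u | 0 < nlK R J n x u} ∈ nhds w := (isOpen_lt continuous_const hKc).mem_nhds hpos
  rcases Metric.mem_nhds_iff.1 this with ⟨ρ₀, hρ₀, hball⟩
  set ρ := min ρ₀ (δ/2 - ‖y - w‖) with hρdef
  have hρ : 0 < ρ := lt_min hρ₀ (by linarith)
  -- O = ball w ρ ∩ R is open nonempty
  have hOopen : IsOpen (ball w ρ ∩ R) := isOpen_ball.inter hRo
  have hOne : (ball w ρ ∩ R).Nonempty :=
    mem_closure_iff.1 hw _ isOpen_ball (mem_ball_self hρ)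
  obtain ⟨w₁, hw₁ball, hw₁R⟩ := hOne
  -- the integrand
  set h : EuclideanSpace ℝ (Fin N) → ℝ := fun u => nlK R J n x u * J (u - y) with hdef
  have hhcont : Continuous h := hKc.mul (hJcont.comp (continuous_id.sub continuous_const))
  have hhnn : ∀ u, 0 ≤ h u := fun u => mul_nonneg (nlK_nonneg hJnonneg n x u) (hJnonneg _)
  have hw₁pos : 0 < h w₁ := by
    apply mul_pos (hball (Metric.ball_subset_ball (min_le_left _ _) hw₁ball))
    apply lt_of_lt_of_le hM
    apply hJδ
    have h1 : ‖w₁ - w‖ < ρ := mem_ball_iff_norm.1 hw₁ball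
    have h2 : ρ ≤ δ/2 - ‖y - w‖ := min_le_right _ _
    have h3 : ‖w₁ - y‖ ≤ ‖w₁ - w‖ + ‖w - y‖ := norm_sub_le_norm_sub_add_norm_sub _ _ _
    have h4 : ‖w - y‖ = ‖y - w‖ := norm_sub_rev w y
    linarith
  -- small ball around w₁ where h > h w₁ / 2, inside O
  have : {u | h w₁ / 2 < h u} ∩ (ball w ρ ∩ R) ∈ nhds w₁ := by
    apply Filter.inter_mem
    · exact (isOpen_lt continuous_const hhcont).mem_nhds (half_lt_self hw₁pos)
    · exact hOopen.mem_nhds ⟨hw₁ball, hw₁R⟩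
  rcases Metric.mem_nhds_iff.1 this with ⟨r, hr, hrsub⟩
  have hint : IntegrableOn h R := integrableOn_of_continuous hRb h hhcont
  have key : h w₁ / 2 * (volume (ball w₁ r)).toReal ≤ ∫ u in ball w₁ r, h u := by
    rw [mul_comm, ← smul_eq_mul, ← measureReal_def]
    apply setIntegral_ge_of_const_le measurableSet_ball measure_ball_lt_top.ne
    · intro u hu; exact le_of_lt (hrsub hu).1
    · exact hint.mono_set (fun u hu => (hrsub hu).2.2)
  have hbpos : 0 < (volume (ball w₁ r)).toReal :=
    ENNReal.toReal_pos (measure_ball_pos volume w₁ hr).ne' measure_ball_lt_top.ne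
  have : 0 < ∫ u in ball w₁ r, h u := lt_of_lt_of_le (by positivity) key
  rw [nlK_succ]
  exact lt_of_lt_of_le this
    (setIntegral_mono_set hint (Filter.Eventually.of_forall fun u => hhnn u)
      (HasSubset.Subset.eventuallyLE (fun u hu => (hrsub hu).2.2)))

lemma chain_connected {E : Type*} [NormedAddCommGroup E] {R : Set E}
    (hRo : IsOpen R) (hRconn : IsPreconnected R) {ε : ℝ} (hε : 0 < ε)
    {x₀ : E} (hx₀ : x₀ ∈ R) :
    ∀ y ∈ R, ∃ m, ∃ w : ℕ → E, w 0 = x₀ ∧ w m = y ∧ (∀ i ≤ m, w i ∈ R) ∧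
      ∀ i < m, ‖w (i+1) - w i‖ < ε := by
  set A : Set E := {y | ∃ m, ∃ w : ℕ → E, w 0 = x₀ ∧ w m = y ∧ (∀ i ≤ m, w i ∈ R) ∧
      ∀ i < m, ‖w (i+1) - w i‖ < ε} with hA
  have hAR : A ⊆ R := by
    rintro y ⟨m, w, h0, hm, hmem, _⟩
    rw [← hm]; exact hmem m le_rfl
  -- extension: a point within min r ε of a chained point, lying in R, is chained
  have hext : ∀ y ∈ A, ∀ y' ∈ R, ‖y' - y‖ < ε → y' ∈ A := by
    rintro y ⟨m, w, h0, hm, hmem, hstep⟩ y' hy'R hdist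
    refine ⟨m + 1, fun i => if i ≤ m then w i else y',
      by simp only [if_pos (Nat.zero_le m)]; exact h0,
      by simp only [if_neg (Nat.not_succ_le_self m)], ?_, ?_⟩
    · intro i hi
      by_cases h : i ≤ m
      · simpa [h] using hmem i h
      · simpa [h] using hy'R
    · intro i hi
      rcases Nat.lt_succ_iff_lt_or_eq.1 hi with h | h
      · have h1 : i ≤ m := le_of_lt h
        have h2 : i + 1 ≤ m := h
        simp only [if_pos h1, if_pos h2]
        exact hstep i h
      · have e1 : ¬ (i + 1 ≤ m) := by omega
        have e2 : i ≤ m := by omega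
        have e3 : w i = y := by rw [← hm]; congr 1
        simp only [if_pos e2, if_neg e1, e3]
        exact hdist
  have hAopen : IsOpen A := by
    rw [Metric.isOpen_iff]
    intro y hy
    rcases Metric.isOpen_iff.1 hRo y (hAR hy) with ⟨r, hr, hrsub⟩
    refine ⟨min r ε, lt_min hr hε, fun y' hy' => ?_⟩
    have h1 : y' ∈ R := hrsub (ball_subset_ball (min_le_left _ _) hy')
    have h2 : ‖y' - y‖ < ε := lt_of_lt_of_le (mem_ball_iff_norm.1 hy') (min_le_right _ _)
    exact hext y hy y' h1 h2
  have hBopen : IsOpen {y | y ∈ R ∧ y ∉ A} := by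
    rw [Metric.isOpen_iff]
    intro y ⟨hyR, hyA⟩
    rcases Metric.isOpen_iff.1 hRo y hyR with ⟨r, hr, hrsub⟩
    refine ⟨min r ε, lt_min hr hε, fun y' hy' => ?_⟩
    refine ⟨hrsub (ball_subset_ball (min_le_left _ _) hy'), fun hy'A => hyA ?_⟩
    have h2 : ‖y - y'‖ < ε := by
      rw [norm_sub_rev]
      exact lt_of_lt_of_le (mem_ball_iff_norm.1 hy') (min_le_right _ _)
    exact hext y' hy'A y hyR h2
  have hsub : R ⊆ A := by
    apply hRconn.subset_left_of_subset_union hAopen hBopen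
    · exact Set.disjoint_left.2 fun y hy ⟨_, h2⟩ => h2 hy
    · intro y hy
      by_cases h : y ∈ A
      · exact Or.inl h
      · exact Or.inr ⟨hy, h⟩
    · exact ⟨x₀, hx₀, 0, fun _ => x₀, rfl, rfl, fun i hi => by simpa [Nat.le_zero.1 hi], by simp⟩
  exact fun y hy => hsub hy

lemma nlK_uniform_pos {R : Set (EuclideanSpace ℝ (Fin N))} {J : EuclideanSpace ℝ (Fin N) → ℝ}
    (hJcont : Continuous J) (hJnonneg : ∀ v, 0 ≤ J v) (hJ0 : 0 < J 0)
    (hRo : IsOpen R) (hRconn : IsConnected R) (hRb : IsBounded R) (hRm : MeasurableSet R)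
    {δ M : ℝ} (hδ : 0 < δ) (hM : 0 < M) (hJδ : ∀ v, ‖v‖ ≤ δ → M ≤ J v) :
    ∃ n c₀, 0 < c₀ ∧ ∀ x ∈ closure R, ∀ y ∈ closure R, c₀ ≤ nlK R J n x y := by
  obtain ⟨x₀, hx₀⟩ := hRconn.nonempty
  -- pointwise positivity on closure R × closure R
  have hpt : ∀ x ∈ closure R, ∀ y ∈ closure R, ∃ n, 0 < nlK R J n x y := by
    intro x hx y hy
    have hδ4 : (0:ℝ) < δ/4 := by linarith
    obtain ⟨x', hx'ball, hx'R⟩ : (ball x (δ/4) ∩ R).Nonempty :=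
      mem_closure_iff.1 hx _ isOpen_ball (mem_ball_self hδ4)
    obtain ⟨y', hy'ball, hy'R⟩ : (ball y (δ/4) ∩ R).Nonempty :=
      mem_closure_iff.1 hy _ isOpen_ball (mem_ball_self hδ4)
    obtain ⟨m, w, hw0, hwm, hwmem, hwstep⟩ :=
      chain_connected hRo hRconn.isPreconnected hδ4 hx'R y' hy'R
    -- induction along the chain
    have hchain : ∀ i, i ≤ m → 0 < nlK R J i x (w i) := by
      intro i
      induction i with
      | zero =>
        intro _
        rw [hw0]
        show 0 < nlK R J 0 x x'
        have : ‖x - x'‖ ≤ δ := by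
          have := mem_ball_iff_norm.1 hx'ball
          rw [norm_sub_rev]
          linarith
        exact lt_of_lt_of_le hM (hJδ _ this)
      | succ i ih =>
        intro hi
        have h1 : i ≤ m := by omega
        apply nlK_pos_step hJcont hJnonneg hRo hRb hRm hδ hM hJδ
          (subset_closure (hwmem i h1)) ?_ (ih h1)
        have := hwstep i (by omega)
        linarith
    have hy'pos : 0 < nlK R J m x y' := by rw [← hwm]; exact hchain m le_rfl
    refine ⟨m + 1, nlK_pos_step hJcont hJnonneg hRo hRb hRm hδ hM hJδ
      (subset_closure hy'R) ?_ hy'pos⟩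
    have := mem_ball_iff_norm.1 hy'ball
    rw [norm_sub_rev]
    linarith
  -- monotone in n on closure R (second argument)
  have hmono : ∀ x, ∀ y ∈ closure R, ∀ n n', n ≤ n' → 0 < nlK R J n x y →
      0 < nlK R J n' x y := by
    intro x y hy n n' hle hpos
    induction n' with
    | zero => rwa [Nat.le_zero.1 hle] at hpos
    | succ n' ih =>
      rcases Nat.le_succ_iff.1 hle with h | h
      · exact nlK_pos_step hJcont hJnonneg hRo hRb hRm hδ hM hJδ hy
          (by simpa using half_pos hδ) (ih h)
      · rwa [h] at hpos
  -- compactness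
  set Q := closure R ×ˢ closure R with hQ
  have hQcomp : IsCompact Q := hRb.isCompact_closure.prod hRb.isCompact_closure
  have hQne : Q.Nonempty := ⟨(x₀, x₀), subset_closure hx₀, subset_closure hx₀⟩
  have hcover : Q ⊆ ⋃ n : ℕ, {p : EuclideanSpace ℝ (Fin N) × EuclideanSpace ℝ (Fin N) |
      0 < nlK R J n p.1 p.2} := by
    rintro ⟨x, y⟩ ⟨hx, hy⟩
    obtain ⟨n, hn⟩ := hpt x hx y hy
    exact Set.mem_iUnion.2 ⟨n, hn⟩
  obtain ⟨t, ht⟩ := hQcomp.elim_finite_subcover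
    (fun n : ℕ => {p : EuclideanSpace ℝ (Fin N) × EuclideanSpace ℝ (Fin N) |
      0 < nlK R J n p.1 p.2})
    (fun n => isOpen_lt continuous_const (nlK_continuous hJcont hRb hRm n)) hcover
  set n₀ := t.sup id with hn₀
  have hposall : ∀ p ∈ Q, 0 < nlK R J n₀ p.1 p.2 := by
    rintro ⟨x, y⟩ hp
    obtain ⟨n, hnt, hn⟩ := Set.mem_iUnion₂.1 (ht hp)
    exact hmono x y hp.2 n n₀ (Finset.le_sup (f := id) hnt) hn
  obtain ⟨p₀, hp₀Q, hp₀min⟩ := hQcomp.exists_isMinOn hQne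
    ((nlK_continuous hJcont hRb hRm n₀).continuousOn)
  exact ⟨n₀, nlK R J n₀ p₀.1 p₀.2, hposall p₀ hp₀Q,
    fun x hx y hy => hp₀min (show (x, y) ∈ Q from ⟨hx, hy⟩)⟩

/-- Energy comparison: the energy of the iterated kernel is controlled by the energy of `J`. -/
lemma nlK_energy_le {R : Set (EuclideanSpace ℝ (Fin N))} {J : EuclideanSpace ℝ (Fin N) → ℝ}
    (hJcont : Continuous J) (hJnonneg : ∀ v, 0 ≤ J v)
    (hRb : IsBounded R) (hRm : MeasurableSet R) (n : ℕ) :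
    ∃ c : ℝ, 0 < c ∧ ∀ z : EuclideanSpace ℝ (Fin N) → ℝ, Measurable z →
      (∫⁻ x in R, ∫⁻ y in R,
          ENNReal.ofReal (nlK R J n x y) * ENNReal.ofReal ((z y - z x)^2) ∂volume ∂volume)
        ≤ ENNReal.ofReal c * ∫⁻ x in R, ∫⁻ y in R,
          ENNReal.ofReal (J (x - y)) * ENNReal.ofReal ((z y - z x)^2) ∂volume ∂volume := by
  have hcomp : IsCompact (closure R) := hRb.isCompact_closure
  have hvol : volume R < ⊤ :=
    lt_of_le_of_lt (measure_mono subset_closure) hcomp.measure_lt_top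
  set V : ℝ := (volume R).toReal with hVdef
  have hVnn : 0 ≤ V := ENNReal.toReal_nonneg
  have hμR : volume R = ENNReal.ofReal V := (ENNReal.ofReal_toReal hvol.ne).symm
  -- bound on J over differences of closure R
  obtain ⟨S₀, hS₀⟩ := (hcomp.prod hcomp).exists_bound_of_continuousOn
    ((hJcont.comp (continuous_fst.sub continuous_snd)).continuousOn)
  set S : ℝ := max S₀ 0 with hSdef
  have hSnn : 0 ≤ S := le_max_right _ _
  have hS : ∀ a ∈ closure R, ∀ b ∈ closure R, J (a - b) ≤ S := fun a ha b hb =>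
    le_trans (le_trans (le_abs_self _) (hS₀ (a, b) ⟨ha, hb⟩)) (le_max_left _ _)
  induction n with
  | zero =>
    refine ⟨1, one_pos, fun z hz => le_of_eq ?_⟩
    simp only [nlK_zero, ENNReal.ofReal_one, one_mul]
  | succ n ih =>
    obtain ⟨c, hc, hcz⟩ := ih
    -- bound on nlK n over (closure R) × (closure R)
    obtain ⟨T₀, hT₀⟩ := (hcomp.prod hcomp).exists_bound_of_continuousOn
      ((nlK_continuous hJcont hRb hRm n).continuousOn)
    set T : ℝ := max T₀ 0 with hTdef
    have hTnn : 0 ≤ T := le_max_right _ _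
    have hT : ∀ a ∈ closure R, ∀ b ∈ closure R, nlK R J n a b ≤ T := fun a ha b hb =>
      le_trans (le_trans (le_abs_self _) (hT₀ (a, b) ⟨ha, hb⟩)) (le_max_left _ _)
    refine ⟨2*S*V*c + 2*T*V + 1, by positivity, fun z hz => ?_⟩
    set g : EuclideanSpace ℝ (Fin N) → EuclideanSpace ℝ (Fin N) → ℝ≥0∞ :=
      fun x y => ENNReal.ofReal ((z y - z x)^2) with hgdef
    set f : EuclideanSpace ℝ (Fin N) → EuclideanSpace ℝ (Fin N) → ℝ≥0∞ :=
      fun x y => ENNReal.ofReal (J (x - y)) with hfdef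
    set k : ℕ → EuclideanSpace ℝ (Fin N) → EuclideanSpace ℝ (Fin N) → ℝ≥0∞ :=
      fun m x y => ENNReal.ofReal (nlK R J m x y) with hkdef
    -- measurability
    have hgm : Measurable (fun p : EuclideanSpace ℝ (Fin N) × EuclideanSpace ℝ (Fin N) =>
        g p.1 p.2) :=
      ENNReal.measurable_ofReal.comp
        (((hz.comp measurable_snd).sub (hz.comp measurable_fst)).pow_const 2)
    have hfm : Measurable (fun p : EuclideanSpace ℝ (Fin N) × EuclideanSpace ℝ (Fin N) =>
        f p.1 p.2) :=
      ENNReal.measurable_ofReal.comp (hJcont.measurable.comp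
        (measurable_fst.sub measurable_snd))
    have hkm : ∀ m, Measurable
        (fun p : EuclideanSpace ℝ (Fin N) × EuclideanSpace ℝ (Fin N) => k m p.1 p.2) :=
      fun m => ENNReal.measurable_ofReal.comp (nlK_continuous hJcont hRb hRm m).measurable
    -- triangle-type bound for g
    have hg2 : ∀ x y w, g x y ≤ 2 * g x w + 2 * g w y := by
      intro x y w
      have hr : (z y - z x)^2 ≤ 2*(z w - z x)^2 + 2*(z y - z w)^2 := by
        nlinarith [sq_nonneg ((z w - z x) - (z y - z w))]
      calc g x y ≤ ENNReal.ofReal (2*(z w - z x)^2 + 2*(z y - z w)^2) :=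
            ENNReal.ofReal_le_ofReal hr
        _ = ENNReal.ofReal (2*(z w - z x)^2) + ENNReal.ofReal (2*(z y - z w)^2) :=
            ENNReal.ofReal_add (by positivity) (by positivity)
        _ = 2 * g x w + 2 * g w y := by
            rw [ENNReal.ofReal_mul (by norm_num), ENNReal.ofReal_mul (by norm_num)]
            norm_num
            rfl
    -- recurrence for k in ℝ≥0∞
    have h1 : ∀ x y, k (n+1) x y = ∫⁻ w in R, k n x w * f w y ∂volume := by
      intro x y
      have hKc : Continuous (fun u => nlK R J n x u) :=
        (nlK_continuous hJcont hRb hRm n).comp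
          (Continuous.prodMk continuous_const continuous_id)
      have hcont : Continuous (fun w => nlK R J n x w * J (w - y)) :=
        hKc.mul (hJcont.comp (continuous_id.sub continuous_const))
      have hint : IntegrableOn (fun w => nlK R J n x w * J (w - y)) R :=
        integrableOn_of_continuous hRb _ hcont
      have hnn : 0 ≤ᵐ[volume.restrict R] fun w => nlK R J n x w * J (w - y) :=
        Filter.Eventually.of_forall fun w =>
          mul_nonneg (nlK_nonneg hJnonneg n x w) (hJnonneg _)
      show ENNReal.ofReal (nlK R J (n+1) x y) = _
      rw [nlK_succ, MeasureTheory.ofReal_integral_eq_lintegral_ofReal hint hnn]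
      exact lintegral_congr fun w => by
        rw [ENNReal.ofReal_mul (nlK_nonneg hJnonneg n x w)]
    -- abbreviations for the two error terms
    set A : EuclideanSpace ℝ (Fin N) → EuclideanSpace ℝ (Fin N) → ℝ≥0∞ :=
      fun x y => ∫⁻ w in R, k n x w * f w y * g x w ∂volume with hAdef
    set B : EuclideanSpace ℝ (Fin N) → EuclideanSpace ℝ (Fin N) → ℝ≥0∞ :=
      fun x y => ∫⁻ w in R, k n x w * f w y * g w y ∂volume with hBdef
    have hgtop : ∀ x y, g x y ≠ ⊤ := fun _ _ => ENNReal.ofReal_ne_top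
    have hm1 : ∀ x y, Measurable (fun w => k n x w * f w y * g x w) := fun x y =>
      (((hkm n).comp (measurable_const.prodMk measurable_id)).mul
        (hfm.comp (measurable_id.prodMk measurable_const))).mul
        (hgm.comp (measurable_const.prodMk measurable_id))
    have hm2 : ∀ x y, Measurable (fun w => k n x w * f w y * g w y) := fun x y =>
      (((hkm n).comp (measurable_const.prodMk measurable_id)).mul
        (hfm.comp (measurable_id.prodMk measurable_const))).mul
        (hgm.comp (measurable_id.prodMk measurable_const))
    have hmeasFA : Measurable (fun q : (EuclideanSpace ℝ (Fin N) × EuclideanSpace ℝ (Fin N)) ×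
        EuclideanSpace ℝ (Fin N) => k n q.1.1 q.2 * f q.2 q.1.2 * g q.1.1 q.2) :=
      (((hkm n).comp ((measurable_fst.comp measurable_fst).prodMk measurable_snd)).mul
        (hfm.comp (measurable_snd.prodMk (measurable_snd.comp measurable_fst)))).mul
        (hgm.comp ((measurable_fst.comp measurable_fst).prodMk measurable_snd))
    have hmeasFB : Measurable (fun q : (EuclideanSpace ℝ (Fin N) × EuclideanSpace ℝ (Fin N)) ×
        EuclideanSpace ℝ (Fin N) => k n q.1.1 q.2 * f q.2 q.1.2 * g q.2 q.1.2) :=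
      (((hkm n).comp ((measurable_fst.comp measurable_fst).prodMk measurable_snd)).mul
        (hfm.comp (measurable_snd.prodMk (measurable_snd.comp measurable_fst)))).mul
        (hgm.comp (measurable_snd.prodMk (measurable_snd.comp measurable_fst)))
    have hAmeas : Measurable (fun p : EuclideanSpace ℝ (Fin N) × EuclideanSpace ℝ (Fin N) =>
        A p.1 p.2) := by
      simp only [hAdef]
      exact hmeasFA.lintegral_prod_right'
    have hBmeas : Measurable (fun p : EuclideanSpace ℝ (Fin N) × EuclideanSpace ℝ (Fin N) =>
        B p.1 p.2) := by
      simp only [hBdef]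
      exact hmeasFB.lintegral_prod_right'
    -- pointwise bound
    have h2 : ∀ x y, k (n+1) x y * g x y ≤ 2 * A x y + 2 * B x y := by
      intro x y
      rw [h1]
      calc (∫⁻ w in R, k n x w * f w y ∂volume) * g x y
          = ∫⁻ w in R, k n x w * f w y * g x y ∂volume :=
            (lintegral_mul_const' _ _ (hgtop x y)).symm
        _ ≤ ∫⁻ w in R, (2 * (k n x w * f w y * g x w)
              + 2 * (k n x w * f w y * g w y)) ∂volume := by
            apply lintegral_mono
            intro w
            calc k n x w * f w y * g x y
                ≤ k n x w * f w y * (2 * g x w + 2 * g w y) :=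
                  mul_le_mul_right (hg2 x y w) _
              _ = 2 * (k n x w * f w y * g x w) + 2 * (k n x w * f w y * g w y) := by ring
        _ = 2 * A x y + 2 * B x y := by
            rw [lintegral_add_left ((hm1 x y).const_mul 2),
              lintegral_const_mul' 2 _ (by norm_num),
              lintegral_const_mul' 2 _ (by norm_num)]
    -- bound A
    have h5 : (∫⁻ x in R, ∫⁻ y in R, A x y ∂volume ∂volume)
        ≤ ENNReal.ofReal S * (∫⁻ x in R, ∫⁻ w in R, k n x w * g x w ∂volume ∂volume)
          * volume R := by
      have hAb : ∀ x, ∫⁻ y in R, A x y ∂volume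
          ≤ (ENNReal.ofReal S * ∫⁻ w in R, k n x w * g x w ∂volume) * volume R := by
        intro x
        refine le_trans (lintegral_mono_ae ?_) (le_of_eq (setLIntegral_const _ _))
        filter_upwards [ae_restrict_mem hRm] with y hy
        calc A x y ≤ ∫⁻ w in R, ENNReal.ofReal S * (k n x w * g x w) ∂volume := by
              apply lintegral_mono_ae
              filter_upwards [ae_restrict_mem hRm] with w hw
              calc k n x w * f w y * g x w
                  ≤ k n x w * ENNReal.ofReal S * g x w := by
                    exact mul_le_mul_left (mul_le_mul_right (ENNReal.ofReal_le_ofReal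
                      (hS w (subset_closure hw) y (subset_closure hy))) _) _
                _ = ENNReal.ofReal S * (k n x w * g x w) := by ring
          _ = ENNReal.ofReal S * ∫⁻ w in R, k n x w * g x w ∂volume :=
              lintegral_const_mul' _ _ ENNReal.ofReal_ne_top
      calc (∫⁻ x in R, ∫⁻ y in R, A x y ∂volume ∂volume)
          ≤ ∫⁻ x in R, (ENNReal.ofReal S * ∫⁻ w in R, k n x w * g x w ∂volume)
              * volume R ∂volume := lintegral_mono hAb
        _ = (∫⁻ x in R, ENNReal.ofReal S * ∫⁻ w in R, k n x w * g x w ∂volume ∂volume)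
              * volume R := lintegral_mul_const' _ _ hvol.ne
        _ = ENNReal.ofReal S * (∫⁻ x in R, ∫⁻ w in R, k n x w * g x w ∂volume ∂volume)
              * volume R := by rw [lintegral_const_mul' _ _ ENNReal.ofReal_ne_top]
    -- bound B
    have hswap : (∫⁻ y in R, ∫⁻ w in R, f w y * g w y ∂volume ∂volume)
        = ∫⁻ x in R, ∫⁻ y in R, f x y * g x y ∂volume ∂volume := by
      exact lintegral_lintegral_swap
        (((hfm.comp measurable_swap).mul (hgm.comp measurable_swap)).aemeasurable)
    have h6 : (∫⁻ x in R, ∫⁻ y in R, B x y ∂volume ∂volume)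
        ≤ ENNReal.ofReal T * (∫⁻ x in R, ∫⁻ y in R, f x y * g x y ∂volume ∂volume)
          * volume R := by
      have hBb : ∀ᵐ x ∂(volume.restrict R), ∫⁻ y in R, B x y ∂volume
          ≤ ENNReal.ofReal T * ∫⁻ y in R, ∫⁻ w in R, f w y * g w y ∂volume ∂volume := by
        filter_upwards [ae_restrict_mem hRm] with x hx
        calc ∫⁻ y in R, B x y ∂volume
            ≤ ∫⁻ y in R, ∫⁻ w in R, ENNReal.ofReal T * (f w y * g w y) ∂volume ∂volume := by
              apply lintegral_mono
              intro y
              apply lintegral_mono_ae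
              filter_upwards [ae_restrict_mem hRm] with w hw
              calc k n x w * f w y * g w y
                  ≤ ENNReal.ofReal T * f w y * g w y :=
                    mul_le_mul_left (mul_le_mul_left (ENNReal.ofReal_le_ofReal
                      (hT x (subset_closure hx) w (subset_closure hw))) _) _
                _ = ENNReal.ofReal T * (f w y * g w y) := by ring
          _ = ENNReal.ofReal T * ∫⁻ y in R, ∫⁻ w in R, f w y * g w y ∂volume ∂volume := by
              rw [← lintegral_const_mul' _ _ (show ENNReal.ofReal T ≠ ⊤ from ENNReal.ofReal_ne_top)]
              exact lintegral_congr fun y =>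
                lintegral_const_mul' _ _ ENNReal.ofReal_ne_top
      calc (∫⁻ x in R, ∫⁻ y in R, B x y ∂volume ∂volume)
          ≤ ∫⁻ _x in R, (ENNReal.ofReal T
              * ∫⁻ y in R, ∫⁻ w in R, f w y * g w y ∂volume ∂volume) ∂volume :=
            lintegral_mono_ae hBb
        _ = (ENNReal.ofReal T * ∫⁻ y in R, ∫⁻ w in R, f w y * g w y ∂volume ∂volume)
              * volume R := setLIntegral_const _ _
        _ = ENNReal.ofReal T * (∫⁻ x in R, ∫⁻ y in R, f x y * g x y ∂volume ∂volume)
              * volume R := by rw [hswap]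
    -- previous step
    have hEn : (∫⁻ x in R, ∫⁻ y in R, k n x y * g x y ∂volume ∂volume)
        ≤ ENNReal.ofReal c * ∫⁻ x in R, ∫⁻ y in R, f x y * g x y ∂volume ∂volume :=
      hcz z hz
    set EJ : ℝ≥0∞ := ∫⁻ x in R, ∫⁻ y in R, f x y * g x y ∂volume ∂volume with hEJdef
    -- assemble
    show (∫⁻ x in R, ∫⁻ y in R, k (n+1) x y * g x y ∂volume ∂volume)
        ≤ ENNReal.ofReal (2*S*V*c + 2*T*V + 1) * EJ
    have h2ofReal : (2 : ℝ≥0∞) = ENNReal.ofReal 2 := by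
      rw [ENNReal.ofReal_ofNat]
    calc (∫⁻ x in R, ∫⁻ y in R, k (n+1) x y * g x y ∂volume ∂volume)
        ≤ ∫⁻ x in R, ∫⁻ y in R, (2 * A x y + 2 * B x y) ∂volume ∂volume :=
          lintegral_mono fun x => lintegral_mono fun y => h2 x y
      _ = 2 * (∫⁻ x in R, ∫⁻ y in R, A x y ∂volume ∂volume)
            + 2 * (∫⁻ x in R, ∫⁻ y in R, B x y ∂volume ∂volume) := by
          have e1 : ∀ x, (∫⁻ y in R, (2 * A x y + 2 * B x y) ∂volume)
              = 2 * (∫⁻ y in R, A x y ∂volume) + 2 * ∫⁻ y in R, B x y ∂volume := by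
            intro x
            have mA : Measurable (fun y => 2 * A x y) :=
              Measurable.const_mul (hAmeas.comp (measurable_const.prodMk measurable_id)) 2
            rw [lintegral_add_left mA,
              lintegral_const_mul' 2 _ (by norm_num),
              lintegral_const_mul' 2 _ (by norm_num)]
          have mA2 : Measurable (fun x => 2 * ∫⁻ y in R, A x y ∂volume) :=
            Measurable.const_mul hAmeas.lintegral_prod_right' 2
          rw [lintegral_congr e1, lintegral_add_left mA2,
            lintegral_const_mul' 2 _ (by norm_num),
            lintegral_const_mul' 2 _ (by norm_num)]
      _ ≤ 2 * (ENNReal.ofReal S * (ENNReal.ofReal c * EJ) * volume R)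
            + 2 * (ENNReal.ofReal T * EJ * volume R) := by
          apply add_le_add
          · exact mul_le_mul_right (le_trans h5 (mul_le_mul_left
              (mul_le_mul_right hEn _) _)) 2
          · exact mul_le_mul_right h6 2
      _ = (ENNReal.ofReal 2 * ENNReal.ofReal S * ENNReal.ofReal c * ENNReal.ofReal V
            + ENNReal.ofReal 2 * ENNReal.ofReal T * ENNReal.ofReal V) * EJ := by
          rw [hμR, h2ofReal]; ring
      _ = ENNReal.ofReal (2*S*c*V + 2*T*V) * EJ := by
          have hmul : ∀ (a b : ℝ), 0 ≤ a →
              ENNReal.ofReal a * ENNReal.ofReal b = ENNReal.ofReal (a*b) :=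
            fun a b ha => (ENNReal.ofReal_mul ha).symm
          rw [hmul 2 S (by norm_num), hmul (2*S) c (by positivity),
            hmul (2*S*c) V (by positivity), hmul 2 T (by norm_num),
            hmul (2*T) V (by positivity),
            ← ENNReal.ofReal_add (by positivity) (by positivity)]
      _ ≤ ENNReal.ofReal (2*S*V*c + 2*T*V + 1) * EJ := by
          apply mul_le_mul_left
          apply ENNReal.ofReal_le_ofReal
          nlinarith [mul_nonneg (mul_nonneg hSnn hVnn) hc.le]

end Aux

theorem nonlocal_poincare_inequality
    (N : ℕ)
    (R : Set (EuclideanSpace ℝ (Fin N)))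
    (hR : IsOpen R) (hRconn : IsConnected R) (hRb : Bornology.IsBounded R)
    (J : EuclideanSpace ℝ (Fin N) → ℝ)
    (hJcont : Continuous J) (hJnonneg : ∀ z, 0 ≤ J z)
    (hJsym : ∀ z, J (-z) = J z)
    (hJint : Integrable J)
    (hJ0 : 0 < J 0) :
    ∃ C > 0, ∀ z : EuclideanSpace ℝ (Fin N) → ℝ,
      MemLp z 2 (volume.restrict R) →
      (∫ x in R, z x) = 0 →
      C * ∫ x in R, (z x) ^ 2 ≤ ∫ x in R, ∫ y in R, J (x - y) * (z y - z x) ^ 2 := by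
  have hRm : MeasurableSet R := hR.measurableSet
  have hcomp : IsCompact (closure R) := hRb.isCompact_closure
  have hvol : volume R < ⊤ :=
    lt_of_le_of_lt (measure_mono subset_closure) hcomp.measure_lt_top
  have hfin : IsFiniteMeasure (volume.restrict R) := ⟨by rwa [Measure.restrict_apply_univ]⟩
  set V : ℝ := (volume R).toReal with hVdef
  have hV : 0 < V :=
    ENNReal.toReal_pos (hR.measure_pos volume hRconn.nonempty).ne' hvol.ne
  -- δ and M
  have hmem : J ⁻¹' Set.Ioi (J 0 / 2) ∈ nhds 0 :=
    hJcont.continuousAt.preimage_mem_nhds (Ioi_mem_nhds (half_lt_self hJ0))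
  rcases Metric.mem_nhds_iff.1 hmem with ⟨δ₀, hδ₀, hsub⟩
  have hδ : 0 < δ₀ / 2 := by linarith
  have hM : 0 < J 0 / 2 := by linarith
  have hJδ : ∀ v, ‖v‖ ≤ δ₀ / 2 → J 0 / 2 ≤ J v := fun v hv =>
    le_of_lt (hsub (mem_ball_zero_iff.2 (lt_of_le_of_lt hv (by linarith))))
  obtain ⟨n₀, c₀, hc₀, hlow⟩ :=
    nlK_uniform_pos hJcont hJnonneg hJ0 hR hRconn hRb hRm hδ hM hJδ
  obtain ⟨c, hc, hcz⟩ := nlK_energy_le hJcont hJnonneg hRb hRm n₀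
  -- bound on J over differences
  obtain ⟨S₀, hS₀⟩ := (hcomp.prod hcomp).exists_bound_of_continuousOn
    ((hJcont.comp (continuous_fst.sub continuous_snd)).continuousOn)
  set S : ℝ := max S₀ 0 with hSdef
  have hSnn : 0 ≤ S := le_max_right _ _
  have hS : ∀ a ∈ closure R, ∀ b ∈ closure R, J (a - b) ≤ S := fun a ha b hb =>
    le_trans (le_trans (le_abs_self _) (hS₀ (a, b) ⟨ha, hb⟩)) (le_max_left _ _)
  refine ⟨2 * V * c₀ / c, by positivity, ?_⟩
  intro z hzmem hz0
  -- measurable representative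
  have hsm := hzmem.aestronglyMeasurable
  set z₀ : EuclideanSpace ℝ (Fin N) → ℝ := hsm.mk z with hz₀def
  have hae : z =ᵐ[volume.restrict R] z₀ := hsm.ae_eq_mk
  have hz₀m : Measurable z₀ := hsm.stronglyMeasurable_mk.measurable
  have hz₀mem : MemLp z₀ 2 (volume.restrict R) := hzmem.ae_eq hae
  have hz₀0 : (∫ x in R, z₀ x) = 0 := by rw [← integral_congr_ae hae]; exact hz0
  have hIeq : (∫ x in R, z x ^ 2) = ∫ x in R, z₀ x ^ 2 :=
    integral_congr_ae (hae.mono fun x hx => by simp only [hx])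
  set I : ℝ := ∫ x in R, z₀ x ^ 2 with hIdef
  have hInn : 0 ≤ I := integral_nonneg fun x => sq_nonneg _
  have hRHSz : (∫ x in R, ∫ y in R, J (x - y) * (z y - z x) ^ 2)
      = ∫ x in R, ∫ y in R, J (x - y) * (z₀ y - z₀ x) ^ 2 := by
    apply integral_congr_ae
    filter_upwards [hae] with x hx
    apply integral_congr_ae
    filter_upwards [hae] with y hy
    simp only [hx, hy]
  -- integrability pieces
  have hsq : Integrable (fun x => z₀ x ^ 2) (volume.restrict R) := hz₀mem.integrable_sq
  have hz₀int : Integrable z₀ (volume.restrict R) := hz₀mem.integrable one_le_two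
  have hint1 : ∀ cx : ℝ, Integrable (fun y => z₀ y ^ 2 - 2 * cx * z₀ y) (volume.restrict R) :=
    fun cx => hsq.sub (hz₀int.const_mul (2 * cx))
  have hint2 : ∀ cx : ℝ, Integrable (fun y => 2 * cx * z₀ y) (volume.restrict R) :=
    fun cx => hz₀int.const_mul (2 * cx)
  have hinner2 : ∀ cx : ℝ, Integrable (fun y => (z₀ y - cx) ^ 2) (volume.restrict R) := by
    intro cx
    have e : (fun y => (z₀ y - cx) ^ 2)
        = fun y => (z₀ y ^ 2 - 2 * cx * z₀ y) + cx ^ 2 := funext fun y => by ring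
    rw [e]
    exact (hint1 cx).add (integrable_const _)
  have hval : ∀ cx : ℝ, (∫ y in R, (z₀ y - cx) ^ 2) = I + cx ^ 2 * V := by
    intro cx
    have e : (fun y => (z₀ y - cx) ^ 2)
        = fun y => (z₀ y ^ 2 - 2 * cx * z₀ y) + cx ^ 2 := funext fun y => by ring
    rw [e, integral_add (hint1 cx) (integrable_const _),
      integral_sub hsq (hint2 cx), integral_const_mul, hz₀0,
      integral_const, measureReal_restrict_apply_univ, measureReal_def, smul_eq_mul]
    ring
  -- the double lintegral of the squared difference
  have hGinner : ∀ x, (∫⁻ y in R, ENNReal.ofReal ((z₀ y - z₀ x) ^ 2) ∂volume)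
      = ENNReal.ofReal (I + z₀ x ^ 2 * V) := fun x => by
    rw [← MeasureTheory.ofReal_integral_eq_lintegral_ofReal (hinner2 (z₀ x))
      (Filter.Eventually.of_forall fun y => sq_nonneg _), hval (z₀ x)]
  have hG : (∫⁻ x in R, ∫⁻ y in R, ENNReal.ofReal ((z₀ y - z₀ x) ^ 2) ∂volume ∂volume)
      = ENNReal.ofReal (2 * V * I) := by
    have hint3 : Integrable (fun x => I + z₀ x ^ 2 * V) (volume.restrict R) :=
      (integrable_const I).add (hsq.mul_const V)
    rw [lintegral_congr hGinner,
      ← MeasureTheory.ofReal_integral_eq_lintegral_ofReal hint3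
        (Filter.Eventually.of_forall fun x =>
          add_nonneg hInn (mul_nonneg (sq_nonneg _) hV.le))]
    congr 1
    rw [integral_add (integrable_const I) (hsq.mul_const V), integral_const,
      measureReal_restrict_apply_univ, measureReal_def, smul_eq_mul]
    have : (∫ x in R, z₀ x ^ 2 * V) = I * V := by
      rw [integral_mul_const, ← hIdef]
    rw [this]
    ring
  -- lower bound for the iterated-kernel energy
  have hlowE : ENNReal.ofReal c₀ * ENNReal.ofReal (2 * V * I)
      ≤ ∫⁻ x in R, ∫⁻ y in R,
          ENNReal.ofReal (nlK R J n₀ x y) * ENNReal.ofReal ((z₀ y - z₀ x) ^ 2)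
          ∂volume ∂volume := by
    rw [← hG, ← lintegral_const_mul' _ _ ENNReal.ofReal_ne_top]
    apply lintegral_mono_ae
    filter_upwards [ae_restrict_mem hRm] with x hx
    rw [← lintegral_const_mul' _ _ ENNReal.ofReal_ne_top]
    apply lintegral_mono_ae
    filter_upwards [ae_restrict_mem hRm] with y hy
    exact mul_le_mul_left (ENNReal.ofReal_le_ofReal
      (hlow x (subset_closure hx) y (subset_closure hy))) _
  set EJ : ℝ≥0∞ := ∫⁻ x in R, ∫⁻ y in R,
      ENNReal.ofReal (J (x - y)) * ENNReal.ofReal ((z₀ y - z₀ x) ^ 2) ∂volume ∂volume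
    with hEJdef
  have hEJ_le : EJ ≤ ENNReal.ofReal S * ENNReal.ofReal (2 * V * I) := by
    rw [← hG, ← lintegral_const_mul' _ _ ENNReal.ofReal_ne_top]
    apply lintegral_mono_ae
    filter_upwards [ae_restrict_mem hRm] with x hx
    rw [← lintegral_const_mul' _ _ ENNReal.ofReal_ne_top]
    apply lintegral_mono_ae
    filter_upwards [ae_restrict_mem hRm] with y hy
    exact mul_le_mul_left (ENNReal.ofReal_le_ofReal
      (hS x (subset_closure hx) y (subset_closure hy))) _
  have hEJtop : EJ ≠ ⊤ :=
    (lt_of_le_of_lt hEJ_le (ENNReal.mul_lt_top ENNReal.ofReal_lt_top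
      ENNReal.ofReal_lt_top)).ne
  -- RHS equals EJ.toReal
  have hmeasInner : AEStronglyMeasurable
      (fun x => ∫ y in R, J (x - y) * (z₀ y - z₀ x) ^ 2 ∂volume) (volume.restrict R) := by
    apply MeasureTheory.AEStronglyMeasurable.integral_prod_right'
      (f := fun p : EuclideanSpace ℝ (Fin N) × EuclideanSpace ℝ (Fin N) =>
        J (p.1 - p.2) * (z₀ p.2 - z₀ p.1) ^ 2)
    exact ((hJcont.measurable.comp (measurable_fst.sub measurable_snd)).mul
      (((hz₀m.comp measurable_snd).sub (hz₀m.comp measurable_fst)).pow_const 2)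
      ).aestronglyMeasurable
  have hRHSeq : (∫ x in R, ∫ y in R, J (x - y) * (z₀ y - z₀ x) ^ 2) = EJ.toReal := by
    rw [integral_eq_lintegral_of_nonneg_ae
      (Filter.Eventually.of_forall fun x =>
        integral_nonneg fun y => mul_nonneg (hJnonneg _) (sq_nonneg _)) hmeasInner]
    congr 1
    apply lintegral_congr_ae
    filter_upwards [ae_restrict_mem hRm] with x hx
    have hintx : Integrable (fun y => J (x - y) * (z₀ y - z₀ x) ^ 2) (volume.restrict R) := by
      apply Integrable.mono ((hinner2 (z₀ x)).const_mul S)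
      · exact ((hJcont.measurable.comp (measurable_const.sub measurable_id)).mul
          ((hz₀m.sub measurable_const).pow_const 2)).aestronglyMeasurable
      · filter_upwards [ae_restrict_mem hRm] with y hy
        have h1 : J (x - y) ≤ S := hS x (subset_closure hx) y (subset_closure hy)
        have h2 : 0 ≤ J (x - y) := hJnonneg _
        have h3 : (0:ℝ) ≤ (z₀ y - z₀ x) ^ 2 := sq_nonneg _
        rw [Real.norm_eq_abs, Real.norm_eq_abs, abs_mul, abs_mul,
          abs_of_nonneg h2, abs_of_nonneg h3, abs_of_nonneg hSnn]
        exact mul_le_mul_of_nonneg_right h1 h3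
    rw [MeasureTheory.ofReal_integral_eq_lintegral_ofReal hintx
      (Filter.Eventually.of_forall fun y => mul_nonneg (hJnonneg _) (sq_nonneg _))]
    exact lintegral_congr fun y => ENNReal.ofReal_mul (hJnonneg _)
  -- combine
  have hup := hcz z₀ hz₀m
  have main : ENNReal.ofReal (c₀ * (2 * V * I)) ≤ ENNReal.ofReal c * EJ := by
    rw [ENNReal.ofReal_mul hc₀.le]
    exact le_trans hlowE hup
  have hfinal : c₀ * (2 * V * I) ≤ c * EJ.toReal := by
    have h1 := ENNReal.toReal_mono
      (ENNReal.mul_ne_top ENNReal.ofReal_ne_top hEJtop) main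
    rwa [ENNReal.toReal_ofReal (by positivity), ENNReal.toReal_mul,
      ENNReal.toReal_ofReal hc.le] at h1
  rw [hIeq, hRHSz, hRHSeq]
  rw [div_mul_eq_mul_div, div_le_iff₀ hc]
  nlinarith [hfinal]
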